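/- arXiv:2204.09842 — 2 statements merged into one kernel-verified Lean document; each statement's English description precedes it below -/
import Mathlib

section
/- For every nonnegative integer t, the graph G' = K_{3+t} \vee ((3+2t)K_2 \cup 2K_1) (the join of a complete graph on 3+t vertices with the disjoint union of 3+2t copies of K_2 and two isolated vertices) is connected but is not a P_{\geq 3}-factor covered graph. -/
open SimpleGraph

section Defs

variable {V : Type*} {α β : Type*}

/-- A graph is *factor-critical* if deleting any vertex leaves a graph
with a perfect matching. -/
def FactorCritical (G : SimpleGraph V) : Prop :=
  ∀ v : V, ∃ M : (G.induce {u | u ≠ v}).Subgraph, M.IsPerfectMatching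

/-- A *sun* is `K₁`, `K₂`, or a graph obtained from a factor-critical graph `R`
with vertex set `Y = {y₁, …, yₙ}` by adding `n` new vertices `x₁, …, xₙ` and the
pendant edges `y₁x₁, …, yₙxₙ`. -/
def IsSun (G : SimpleGraph V) : Prop :=
  (Nat.card V = 1) ∨ (Nat.card V = 2 ∧ G.Connected) ∨
  (∃ Y : Set V, Y.Nonempty ∧ FactorCritical (G.induce Y) ∧
    ∃ f : (Yᶜ : Set V) ≃ Y, ∀ x : (Yᶜ : Set V), G.neighborSet ↑x = {(↑(f x) : V)})

/-- `sunCount G` is the number of connected components of `G` that are suns. -/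
noncomputable def sunCount (G : SimpleGraph V) : ℕ :=
  Nat.card {c : G.ConnectedComponent // IsSun (G.induce c.supp)}

/-- Number of isolated vertices of a graph. -/
noncomputable def isolatedCount (G : SimpleGraph V) : ℕ :=
  {v : V | ∀ w : V, ¬ G.Adj v w}.ncard

/-- A set of vertices is independent if no two of its vertices are adjacent. -/
def IndepSet (G : SimpleGraph V) (A : Set V) : Prop :=
  A.Pairwise fun u v => ¬ G.Adj u v

/-- The independence number of a graph: the maximum size of an independent set. -/
noncomputable def indepNum (G : SimpleGraph V) : ℕ :=
  sSup {n | ∃ A : Set V, IndepSet G A ∧ A.ncard = n}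

/-- The neighborhood `N_G(A)` of a set `A` of vertices: the union of the
neighborhoods of the vertices of `A`. -/
def neighborSetOf (G : SimpleGraph V) (A : Set V) : Set V :=
  {v | ∃ a ∈ A, G.Adj a v}

/-- `H` is a `P_{≥3}`-factor of `G`: a spanning subgraph of `G` each of whose
connected components is a path on at least `3` vertices. -/
def IsPathFactor (G H : SimpleGraph V) : Prop :=
  H ≤ G ∧ ∀ c : H.ConnectedComponent,
    ∃ n : ℕ, 3 ≤ n ∧ Nonempty ((H.induce c.supp) ≃g pathGraph n)

/-- A connected graph `G` is a `P_{≥3}`-factor covered graph if every edge of `G`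
is contained in some `P_{≥3}`-factor of `G`. -/
def PathFactorCovered (G : SimpleGraph V) : Prop :=
  G.Connected ∧ ∀ e ∈ G.edgeSet, ∃ H : SimpleGraph V, IsPathFactor G H ∧ e ∈ H.edgeSet

/-- A graph `G` is a `P_{≥3}`-factor uniform graph if `G - e` is a
`P_{≥3}`-factor covered graph for every edge `e` of `G`. -/
def PathFactorUniform (G : SimpleGraph V) : Prop :=
  ∀ e ∈ G.edgeSet, PathFactorCovered (G.deleteEdges {e})

/-- The parameter `ε(X)` from Zhou–Zhang's characterization of
`P_{≥3}`-factor covered graphs. -/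
noncomputable def eps (G : SimpleGraph V) (X : Set V) : ℕ := by
  classical
  exact if ¬ IndepSet G X then 2
    else if X.Nonempty ∧ ∃ c : (G.induce Xᶜ).ConnectedComponent,
        ¬ IsSun ((G.induce Xᶜ).induce c.supp) then 1
    else 0

/-- A graph is 2-edge-connected if it is connected and stays connected after
the deletion of any single edge. -/
def TwoEdgeConnected (G : SimpleGraph V) : Prop :=
  G.Connected ∧ ∀ e ∈ G.edgeSet, (G.deleteEdges {e}).Connected

/-- A graph is `k`-connected if it has more than `k` vertices and remains
connected after deleting any fewer than `k` vertices. -/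
def KConnected [Fintype V] (k : ℕ) (G : SimpleGraph V) : Prop :=
  k < Fintype.card V ∧ ∀ S : Set V, S.ncard < k → (G.induce Sᶜ).Connected

/-- The join `G₁ ∨ G₂` of two graphs: take disjoint copies of `G₁` and `G₂`
and add all edges between them. -/
def graphJoin (G : SimpleGraph α) (H : SimpleGraph β) : SimpleGraph (α ⊕ β) where
  Adj x y :=
    match x, y with
    | Sum.inl a, Sum.inl b => G.Adj a b
    | Sum.inr a, Sum.inr b => H.Adj a b
    | Sum.inl _, Sum.inr _ => True
    | Sum.inr _, Sum.inl _ => True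
  symm := ⟨by
    rintro (a | a) (b | b) h
    · exact G.adj_symm h
    · trivial
    · trivial
    · exact H.adj_symm h⟩
  loopless := ⟨by
    rintro (a | a) h
    · exact G.irrefl h
    · exact H.irrefl h⟩

/-- The disjoint union of two graphs. -/
def graphSum (G : SimpleGraph α) (H : SimpleGraph β) : SimpleGraph (α ⊕ β) where
  Adj x y :=
    match x, y with
    | Sum.inl a, Sum.inl b => G.Adj a b
    | Sum.inr a, Sum.inr b => H.Adj a b
    | _, _ => False
  symm := ⟨by
    rintro (a | a) (b | b) h
    · exact G.adj_symm h
    · exact h.elim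
    · exact h.elim
    · exact H.adj_symm h⟩
  loopless := ⟨by
    rintro (a | a) h
    · exact G.irrefl h
    · exact H.irrefl h⟩

/-- `mK2 m` is the disjoint union of `m` copies of `K₂`. -/
def mK2 (m : ℕ) : SimpleGraph (Fin m × Fin 2) where
  Adj p q := p.1 = q.1 ∧ p.2 ≠ q.2
  symm := ⟨by rintro p q ⟨h1, h2⟩; exact ⟨h1.symm, h2.symm⟩⟩
  loopless := ⟨by rintro p ⟨h1, h2⟩; exact h2 rfl⟩

end Defs

section Helpers

variable {W : Type*} {H : SimpleGraph W}

/-- A set closed under adjacency absorbs walks. -/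
lemma closure_walk (S : Set W) (hS : ∀ u ∈ S, ∀ w, H.Adj u w → w ∈ S) :
    ∀ {u v : W}, H.Walk u v → u ∈ S → v ∈ S := by
  intro u v p
  induction p with
  | nil => exact fun h => h
  | cons hab q ih => exact fun h => ih (hS _ h _ hab)

/-- In a graph all of whose components are paths on at least three vertices,
each vertex can reach three pairwise distinct vertices. -/
lemma exists_three
    (hP : ∀ c : H.ConnectedComponent,
      ∃ n : ℕ, 3 ≤ n ∧ Nonempty ((H.induce c.supp) ≃g SimpleGraph.pathGraph n)) (v : W) :
    ∃ w1 w2 w3 : W, w1 ≠ w2 ∧ w1 ≠ w3 ∧ w2 ≠ w3 ∧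
      H.Reachable v w1 ∧ H.Reachable v w2 ∧ H.Reachable v w3 := by
  obtain ⟨n, hn, ⟨φ⟩⟩ := hP (H.connectedComponentMk v)
  have hreach : ∀ k : Fin n, H.Reachable v ((φ.symm k) : W) := by
    intro k
    have hm : H.connectedComponentMk ((φ.symm k) : W) = H.connectedComponentMk v :=
      (φ.symm k).2
    exact (SimpleGraph.ConnectedComponent.exact hm).symm
  have hinj : ∀ k k' : Fin n, ((φ.symm k) : W) = ((φ.symm k') : W) → k = k' := by
    intro k k' h
    exact φ.symm.toEquiv.injective (Subtype.ext h)
  have hd : ∀ (a b : ℕ) (ha : a < n) (hb : b < n), a ≠ b →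
      ((φ.symm ⟨a, ha⟩ : W) ≠ (φ.symm ⟨b, hb⟩ : W)) := by
    intro a b ha hb hab h
    have := hinj _ _ h
    rw [Fin.mk.injEq] at this
    exact hab this
  exact ⟨(φ.symm ⟨0, by omega⟩ : W), (φ.symm ⟨1, by omega⟩ : W), (φ.symm ⟨2, by omega⟩ : W),
    hd 0 1 (by omega) (by omega) (by omega), hd 0 2 (by omega) (by omega) (by omega),
    hd 1 2 (by omega) (by omega) (by omega), hreach _, hreach _, hreach _⟩

/-- In a graph all of whose components are paths, no vertex has three
distinct neighbours. -/
lemma no_three_neighbors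
    (hP : ∀ c : H.ConnectedComponent,
      ∃ n : ℕ, 3 ≤ n ∧ Nonempty ((H.induce c.supp) ≃g SimpleGraph.pathGraph n))
    {v w1 w2 w3 : W} (h1 : H.Adj v w1) (h2 : H.Adj v w2) (h3 : H.Adj v w3) :
    w1 = w2 ∨ w1 = w3 ∨ w2 = w3 := by
  by_contra hcon
  push_neg at hcon
  obtain ⟨h12, h13, h23⟩ := hcon
  obtain ⟨n, hn, ⟨φ⟩⟩ := hP (H.connectedComponentMk v)
  have hv : v ∈ (H.connectedComponentMk v).supp := rfl
  have hw : ∀ w : W, H.Adj v w → w ∈ (H.connectedComponentMk v).supp := by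
    intro w hw
    exact SimpleGraph.ConnectedComponent.sound hw.symm.reachable
  have hadj : ∀ (w : W) (h : H.Adj v w),
      (SimpleGraph.pathGraph n).Adj (φ ⟨v, hv⟩) (φ ⟨w, hw w h⟩) := by
    intro w h
    exact φ.map_adj_iff.mpr h
  have p1 := (SimpleGraph.pathGraph_adj).mp (hadj w1 h1)
  have p2 := (SimpleGraph.pathGraph_adj).mp (hadj w2 h2)
  have p3 := (SimpleGraph.pathGraph_adj).mp (hadj w3 h3)
  have hne : ∀ w w' : W, w ≠ w' →
      ∀ (hw1 : w ∈ (H.connectedComponentMk v).supp)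
        (hw2 : w' ∈ (H.connectedComponentMk v).supp),
      ((φ ⟨w, hw1⟩ : Fin n) : ℕ) ≠ ((φ ⟨w', hw2⟩ : Fin n) : ℕ) := by
    intro w w' hww hw1 hw2 hval
    exact hww (congrArg Subtype.val (φ.toEquiv.injective (Fin.val_injective hval)))
  have q12 := hne w1 w2 h12 (hw w1 h1) (hw w2 h2)
  have q13 := hne w1 w3 h13 (hw w1 h1) (hw w3 h3)
  have q23 := hne w2 w3 h23 (hw w2 h2) (hw w3 h3)
  omega

end Helpers

/-- **Remark 1 (continued).** For every `t ≥ 0`, the graph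
`G' = K_{3+t} ∨ ((3+2t)K₂ ∪ 2K₁)` is connected but is not a `P_{≥3}`-factor
covered graph. -/
theorem stmt5 (t : ℕ) :
    letI G' := graphJoin (completeGraph (Fin (3 + t)))
      (graphSum (mK2 (3 + 2 * t)) (⊥ : SimpleGraph (Fin 2)))
    G'.Connected ∧ ¬ PathFactorCovered G' := by
  classical
  set G' := graphJoin (completeGraph (Fin (3 + t)))
      (graphSum (mK2 (3 + 2 * t)) (⊥ : SimpleGraph (Fin 2))) with hG'
  -- basic adjacency facts
  have hub : ∀ v : Fin (3 + t) ⊕ (Fin (3 + 2 * t) × Fin 2 ⊕ Fin 2),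
      v ≠ Sum.inl ⟨0, by omega⟩ → G'.Adj v (Sum.inl ⟨0, by omega⟩) := by
    rintro (x | y) hne
    · show x ≠ ⟨0, by omega⟩
      exact fun h => hne (by rw [h])
    · trivial
  have hconn : G'.Connected := by
    have hne : Nonempty (Fin (3 + t) ⊕ (Fin (3 + 2 * t) × Fin 2 ⊕ Fin 2)) :=
      ⟨Sum.inl ⟨0, by omega⟩⟩
    refine @SimpleGraph.Connected.mk _ _ ?_ hne
    intro u v
    by_cases hu : u = Sum.inl ⟨0, by omega⟩
    · by_cases hv : v = Sum.inl ⟨0, by omega⟩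
      · rw [hu, hv]
      · rw [hu]; exact ((hub v hv).symm).reachable
    · by_cases hv : v = Sum.inl ⟨0, by omega⟩
      · rw [hv]; exact (hub u hu).reachable
      · exact ((hub u hu).reachable).trans ((hub v hv).symm).reachable
  refine ⟨hconn, ?_⟩
  rintro ⟨-, hcov⟩
  set x0 : Fin (3 + t) := ⟨0, by omega⟩ with hx0
  set x1 : Fin (3 + t) := ⟨1, by omega⟩ with hx1
  have hne01 : x0 ≠ x1 := by
    simp only [hx0, hx1, ne_eq, Fin.mk.injEq]
    omega
  obtain ⟨H, ⟨hle, hP⟩, he⟩ := hcov s(Sum.inl x0, Sum.inl x1) (by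
    rw [SimpleGraph.mem_edgeSet]
    exact hne01)
  rw [SimpleGraph.mem_edgeSet] at he
  -- he : H.Adj (Sum.inl x0) (Sum.inl x1)
  -- counting functions
  -- cross-edge lower bounds
  have hsingle : ∀ j : Fin 2,
      1 ≤ (Finset.univ.filter fun x : Fin (3 + t) =>
        H.Adj (Sum.inl x) (Sum.inr (Sum.inr j))).card := by
    intro j
    obtain ⟨w1, w2, w3, h12, h13, h23, r1, r2, r3⟩ := exists_three hP
      (Sum.inr (Sum.inr j) : Fin (3 + t) ⊕ (Fin (3 + 2 * t) × Fin 2 ⊕ Fin 2))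
    have : ∃ w, w ≠ Sum.inr (Sum.inr j) ∧
        H.Reachable (Sum.inr (Sum.inr j)) w := by
      by_cases h1 : w1 = Sum.inr (Sum.inr j)
      · exact ⟨w2, by rw [← h1]; exact fun h => h12 h.symm, r2⟩
      · exact ⟨w1, h1, r1⟩
    obtain ⟨w, hwne, hr⟩ := this
    obtain ⟨p⟩ := hr
    cases p with
    | nil => exact absurd rfl hwne
    | @cons _ b _ hvb q =>
      rcases b with x | (pp | j')
      · exact Finset.card_pos.mpr ⟨x, Finset.mem_filter.mpr ⟨Finset.mem_univ _, hvb.symm⟩⟩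
      · exact False.elim (hle hvb)
      · exact False.elim (hle hvb)
  have hpairlb : ∀ i : Fin (3 + 2 * t),
      1 ≤ (Finset.univ.filter fun x : Fin (3 + t) =>
          H.Adj (Sum.inl x) (Sum.inr (Sum.inl (i, 0)))).card +
        (Finset.univ.filter fun x : Fin (3 + t) =>
          H.Adj (Sum.inl x) (Sum.inr (Sum.inl (i, 1)))).card := by
    intro i
    by_contra hcon
    push_neg at hcon
    have hno : ∀ (b : Fin 2) (x : Fin (3 + t)),
        ¬ H.Adj (Sum.inl x) (Sum.inr (Sum.inl (i, b))) := by
      intro b x hadjx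
      have hb : b = 0 ∨ b = 1 := by
        by_cases hb0 : b = 0
        · exact Or.inl hb0
        · exact Or.inr (b.eq_one_of_ne_zero hb0)
      have hmem : x ∈ Finset.univ.filter fun x : Fin (3 + t) =>
          H.Adj (Sum.inl x) (Sum.inr (Sum.inl (i, b))) :=
        Finset.mem_filter.mpr ⟨Finset.mem_univ _, hadjx⟩
      have hcard := Finset.card_pos.mpr ⟨x, hmem⟩
      rcases hb with rfl | rfl <;> omega
    set a : Fin (3 + t) ⊕ (Fin (3 + 2 * t) × Fin 2 ⊕ Fin 2) := Sum.inr (Sum.inl (i, 0)) with ha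
    set b : Fin (3 + t) ⊕ (Fin (3 + 2 * t) × Fin 2 ⊕ Fin 2) := Sum.inr (Sum.inl (i, 1)) with hb
    have hclA : ∀ w, H.Adj a w → w = b := by
      rintro (x | (⟨q1, q2⟩ | j)) h
      · exact absurd h.symm (hno 0 x)
      · obtain ⟨hq1, hq2⟩ : i = q1 ∧ (0 : Fin 2) ≠ q2 := hle h
        have : q2 = 1 := q2.eq_one_of_ne_zero (fun hh => hq2 hh.symm)
        rw [hb, ← hq1, this]
      · exact False.elim (hle h)
    have hclB : ∀ w, H.Adj b w → w = a := by
      rintro (x | (⟨q1, q2⟩ | j)) h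
      · exact absurd h.symm (hno 1 x)
      · obtain ⟨hq1, hq2⟩ : i = q1 ∧ (1 : Fin 2) ≠ q2 := hle h
        have : q2 = 0 := by
          by_contra hq0
          exact hq2 (q2.eq_one_of_ne_zero hq0).symm
        rw [ha, ← hq1, this]
      · exact False.elim (hle h)
    have hclosed : ∀ u ∈ ({a, b} : Set _), ∀ w, H.Adj u w → w ∈ ({a, b} : Set _) := by
      intro u hu w hadj
      rcases hu with rfl | hu
      · exact Or.inr (hclA w hadj)
      · rw [Set.mem_singleton_iff] at hu
        subst hu
        exact Or.inl (hclB w hadj)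
    obtain ⟨w1, w2, w3, h12, h13, h23, r1, r2, r3⟩ := exists_three hP a
    have hm : ∀ w, H.Reachable a w → w = a ∨ w = b := by
      intro w hr
      obtain ⟨p⟩ := hr
      exact closure_walk {a, b} hclosed p (Or.inl rfl)
    rcases hm w1 r1 with e1 | e1 <;> rcases hm w2 r2 with e2 | e2 <;>
      rcases hm w3 r3 with e3 | e3 <;>
      first
      | exact h12 (e1.trans e2.symm)
      | exact h13 (e1.trans e3.symm)
      | exact h23 (e2.trans e3.symm)
  -- upper bounds
  have hup : ∀ x : Fin (3 + t),
      (Finset.univ.filter fun y : Fin (3 + 2 * t) × Fin 2 ⊕ Fin 2 =>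
        H.Adj (Sum.inl x) (Sum.inr y)).card ≤ 2 := by
    intro x
    by_contra hcon
    push_neg at hcon
    obtain ⟨y1, hy1, y2, hy2, y3, hy3, g12, g13, g23⟩ := Finset.two_lt_card.mp hcon
    have a1 := (Finset.mem_filter.mp hy1).2
    have a2 := (Finset.mem_filter.mp hy2).2
    have a3 := (Finset.mem_filter.mp hy3).2
    rcases no_three_neighbors hP a1 a2 a3 with h | h | h
    · exact g12 (Sum.inr_injective h)
    · exact g13 (Sum.inr_injective h)
    · exact g23 (Sum.inr_injective h)
  have hup1 : ∀ x : Fin (3 + t), H.Adj (Sum.inl x) (Sum.inl x0) ∨ H.Adj (Sum.inl x) (Sum.inl x1) →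
      (Finset.univ.filter fun y : Fin (3 + 2 * t) × Fin 2 ⊕ Fin 2 =>
        H.Adj (Sum.inl x) (Sum.inr y)).card ≤ 1 := by
    intro x hx
    by_contra hcon
    push_neg at hcon
    obtain ⟨y1, hy1, y2, hy2, g12⟩ := Finset.one_lt_card.mp hcon
    have a1 := (Finset.mem_filter.mp hy1).2
    have a2 := (Finset.mem_filter.mp hy2).2
    rcases hx with hx | hx
    all_goals {
      rcases no_three_neighbors hP a1 a2 hx with h | h | h
      · exact g12 (Sum.inr_injective h)
      · exact Sum.inl_ne_inr h.symm
      · exact Sum.inl_ne_inr h.symm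
    }
  have h01a := hup1 x0 (Or.inr he)
  have h01b := hup1 x1 (Or.inl he.symm)
  have hmem1 : x1 ∈ Finset.univ.erase x0 :=
    Finset.mem_erase.mpr ⟨fun h => hne01 h.symm, Finset.mem_univ _⟩
  have hsplit :
      ∑ x : Fin (3 + t), (Finset.univ.filter fun y : Fin (3 + 2 * t) × Fin 2 ⊕ Fin 2 =>
          H.Adj (Sum.inl x) (Sum.inr y)).card =
        (Finset.univ.filter fun y : Fin (3 + 2 * t) × Fin 2 ⊕ Fin 2 =>
          H.Adj (Sum.inl x0) (Sum.inr y)).card +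
        ((Finset.univ.filter fun y : Fin (3 + 2 * t) × Fin 2 ⊕ Fin 2 =>
          H.Adj (Sum.inl x1) (Sum.inr y)).card +
          ∑ x ∈ (Finset.univ.erase x0).erase x1,
            (Finset.univ.filter fun y : Fin (3 + 2 * t) × Fin 2 ⊕ Fin 2 =>
              H.Adj (Sum.inl x) (Sum.inr y)).card) := by
    have e1 := (Finset.add_sum_erase Finset.univ
      (fun x : Fin (3 + t) => (Finset.univ.filter fun y : Fin (3 + 2 * t) × Fin 2 ⊕ Fin 2 =>
        H.Adj (Sum.inl x) (Sum.inr y)).card) (Finset.mem_univ x0)).symm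
    have e2 := (Finset.add_sum_erase (Finset.univ.erase x0)
      (fun x : Fin (3 + t) => (Finset.univ.filter fun y : Fin (3 + 2 * t) × Fin 2 ⊕ Fin 2 =>
        H.Adj (Sum.inl x) (Sum.inr y)).card) hmem1).symm
    rw [e1, e2]
  have hrest : ∑ x ∈ (Finset.univ.erase x0).erase x1,
      (Finset.univ.filter fun y : Fin (3 + 2 * t) × Fin 2 ⊕ Fin 2 =>
        H.Adj (Sum.inl x) (Sum.inr y)).card ≤ ((Finset.univ.erase x0).erase x1).card * 2 := by
    have := Finset.sum_le_card_nsmul ((Finset.univ.erase x0).erase x1)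
      (fun x => (Finset.univ.filter fun y : Fin (3 + 2 * t) × Fin 2 ⊕ Fin 2 =>
        H.Adj (Sum.inl x) (Sum.inr y)).card) 2 (fun x _ => hup x)
    simpa using this
  have hcard : ((Finset.univ.erase x0).erase x1).card = 1 + t := by
    rw [Finset.card_erase_of_mem hmem1, Finset.card_erase_of_mem (Finset.mem_univ x0),
      Finset.card_univ, Fintype.card_fin]
    omega
  have hswap : ∑ x : Fin (3 + t), (Finset.univ.filter fun y : Fin (3 + 2 * t) × Fin 2 ⊕ Fin 2 =>
        H.Adj (Sum.inl x) (Sum.inr y)).card =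
      ∑ y : Fin (3 + 2 * t) × Fin 2 ⊕ Fin 2, (Finset.univ.filter fun x : Fin (3 + t) =>
        H.Adj (Sum.inl x) (Sum.inr y)).card := by
    simp only [Finset.card_filter]
    exact Finset.sum_comm
  have hlow : (3 + 2 * t) + 2 ≤ ∑ y : Fin (3 + 2 * t) × Fin 2 ⊕ Fin 2,
      (Finset.univ.filter fun x : Fin (3 + t) => H.Adj (Sum.inl x) (Sum.inr y)).card := by
    rw [Fintype.sum_sum_type]
    have h1 : 3 + 2 * t ≤ ∑ p : Fin (3 + 2 * t) × Fin 2,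
        (Finset.univ.filter fun x : Fin (3 + t) =>
          H.Adj (Sum.inl x) (Sum.inr (Sum.inl p))).card := by
      rw [Fintype.sum_prod_type]
      calc 3 + 2 * t = ∑ _i : Fin (3 + 2 * t), 1 := by simp
        _ ≤ _ := Finset.sum_le_sum (fun i _ => by
            rw [Fin.sum_univ_two]
            exact hpairlb i)
    have h2 : 2 ≤ ∑ j : Fin 2,
        (Finset.univ.filter fun x : Fin (3 + t) =>
          H.Adj (Sum.inl x) (Sum.inr (Sum.inr j))).card := by
      rw [Fin.sum_univ_two]
      have a0 := hsingle 0
      have a1 := hsingle 1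
      omega
    omega
  rw [hswap] at hsplit
  omega
end

section
/- Let G be a 2-edge-connected graph with \delta(G) > (\alpha(G) + 4)/2, let e be an edge of G and let G' = G - e. If X is a vertex subset of G' satisfying sun(G' - X) \geq 2|X| - \varepsilon(X) + 1, then X is nonempty. -/
open SimpleGraph

lemma sun_low_deg {W : Type*} [Fintype W] (H : SimpleGraph W) (c : H.ConnectedComponent)
    (hs : IsSun (H.induce c.supp)) : ∃ v : W, (H.neighborSet v).ncard ≤ 1 := by
  have hsub : ∀ v ∈ c.supp, H.neighborSet v ⊆ c.supp := by
    intro v hv w hw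
    rw [SimpleGraph.ConnectedComponent.mem_supp_iff] at hv ⊢
    rw [← hv]
    exact SimpleGraph.ConnectedComponent.sound (H.adj_symm hw).reachable
  obtain ⟨v0, hv0⟩ := c.exists_rep
  have hv0s : v0 ∈ c.supp := by rwa [SimpleGraph.ConnectedComponent.mem_supp_iff]
  rcases hs with h1 | ⟨h2, _⟩ | ⟨Y, hYne, _, f, hf⟩
  · refine ⟨v0, ?_⟩
    rw [Nat.card_coe_set_eq] at h1
    obtain ⟨a, ha⟩ := Set.ncard_eq_one.mp h1
    have hva : v0 = a := by rw [ha] at hv0s; exact hv0s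
    have : H.neighborSet v0 = ∅ := by
      ext w
      simp only [Set.mem_empty_iff_false, iff_false, SimpleGraph.mem_neighborSet]
      intro hw
      have hws : w ∈ c.supp := hsub v0 hv0s hw
      rw [ha, Set.mem_singleton_iff] at hws
      rw [hws, ← hva] at hw
      exact H.loopless.irrefl v0 hw
    rw [this]; simp
  · refine ⟨v0, ?_⟩
    rw [Nat.card_coe_set_eq] at h2
    have hsub2 : H.neighborSet v0 ⊆ c.supp \ {v0} := by
      intro w hw
      exact ⟨hsub v0 hv0s hw, by
        simp only [Set.mem_singleton_iff]
        rintro rfl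
        exact H.loopless.irrefl _ hw⟩
    calc (H.neighborSet v0).ncard ≤ (c.supp \ {v0}).ncard :=
          Set.ncard_le_ncard hsub2 (Set.toFinite _)
      _ = c.supp.ncard - 1 := Set.ncard_diff_singleton_of_mem hv0s
      _ ≤ 1 := by omega
  · obtain ⟨y, hy⟩ := hYne
    set x : (Yᶜ : Set ↥c.supp) := f.symm ⟨y, hy⟩ with hxdef
    refine ⟨(↑(↑x : ↥c.supp) : W), ?_⟩
    have hsing : H.neighborSet ↑(↑x : ↥c.supp) ⊆ {(↑(↑(f x) : ↥c.supp) : W)} := by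
      intro w hw
      have hws : w ∈ c.supp := hsub _ (↑x : ↥c.supp).2 hw
      have hmem : (⟨w, hws⟩ : ↥c.supp) ∈ (H.induce c.supp).neighborSet ↑x := hw
      rw [hf x, Set.mem_singleton_iff] at hmem
      simp only [Set.mem_singleton_iff]
      exact congrArg Subtype.val hmem
    calc (H.neighborSet _).ncard ≤ _ := Set.ncard_le_ncard hsing (Set.toFinite _)
      _ = 1 := Set.ncard_singleton _

/-- **Claim 1 in the proof of Theorem 1.3.** Let `G` be 2-edge-connected with
`δ(G) > (α(G)+4)/2`, let `e ∈ E(G)` and `G' = G - e`. If `X ⊆ V(G')` satisfies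
`sun(G' - X) ≥ 2|X| - ε(X) + 1`, then `X ≠ ∅`. -/
theorem stmt8 {V : Type*} [Fintype V] (G : SimpleGraph V) [DecidableRel G.Adj]
    (h2ec : TwoEdgeConnected G)
    (hdeg : (G.minDegree : ℝ) > ((_root_.indepNum G : ℝ) + 4) / 2)
    (e : Sym2 V) (he : e ∈ G.edgeSet) (X : Set V)
    (hX : (sunCount ((G.deleteEdges {e}).induce Xᶜ) : ℤ) ≥
      2 * X.ncard - eps (G.deleteEdges {e}) X + 1) :
    X.Nonempty := by
  classical
  by_contra hne
  rw [Set.not_nonempty_iff_eq_empty] at hne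
  subst hne
  induction e using Sym2.ind with
  | _ p q =>
  rw [SimpleGraph.mem_edgeSet] at he
  set G' := G.deleteEdges {s(p, q)} with hG'
  have heps : eps G' (∅ : Set V) = 0 := by
    simp [eps, IndepSet]
  rw [heps] at hX
  have h1le : 1 ≤ sunCount (G'.induce ((∅ : Set V)ᶜ)) := by
    have : (1 : ℤ) ≤ (sunCount (G'.induce ((∅ : Set V)ᶜ)) : ℤ) := by
      simpa [Set.ncard_empty] using hX
    exact_mod_cast this
  have hpos : 0 < Nat.card {c : (G'.induce ((∅ : Set V)ᶜ)).ConnectedComponent //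
      IsSun ((G'.induce ((∅ : Set V)ᶜ)).induce c.supp)} := h1le
  obtain ⟨⟨c, hc⟩⟩ := (Nat.card_pos_iff.mp hpos).1
  obtain ⟨v, hv⟩ := sun_low_deg _ c hc
  have himg : G'.neighborSet ↑v = Subtype.val '' ((G'.induce ((∅ : Set V)ᶜ)).neighborSet v) := by
    ext w
    constructor
    · intro hw
      exact ⟨⟨w, by simp⟩, hw, rfl⟩
    · rintro ⟨w', hw', rfl⟩
      exact hw'
  have hG'card : (G'.neighborSet ↑v).ncard ≤ 1 := by
    rw [himg, Set.ncard_image_of_injective _ Subtype.val_injective]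
    exact hv
  set u : V := if (↑v : V) = p then q else p with hu
  have hext : G.neighborSet ↑v ⊆ insert u (G'.neighborSet ↑v) := by
    intro w hw
    by_cases hcase : s((↑v : V), w) = s(p, q)
    · rw [Sym2.eq_iff] at hcase
      rcases hcase with ⟨hvp, hwq⟩ | ⟨hvq, hwp⟩
      · rw [Set.mem_insert_iff]
        left
        rw [hu, if_pos hvp, hwq]
      · rw [Set.mem_insert_iff]
        left
        have hvnp : (↑v : V) ≠ p := by
          rintro rfl
          exact G.loopless.irrefl _ (hvq ▸ he)
        rw [hu, if_neg hvnp, hwp]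
    · rw [Set.mem_insert_iff]
      right
      rw [SimpleGraph.mem_neighborSet, hG', SimpleGraph.deleteEdges_adj]
      exact ⟨hw, by simpa using hcase⟩
  have hcard : (G.neighborSet ↑v).ncard ≤ 2 := by
    calc (G.neighborSet ↑v).ncard ≤ (insert u (G'.neighborSet ↑v)).ncard :=
          Set.ncard_le_ncard hext (Set.toFinite _)
      _ ≤ (G'.neighborSet ↑v).ncard + 1 := Set.ncard_insert_le _ _
      _ ≤ 2 := by omega
  have hdegeq : G.degree ↑v = (G.neighborSet ↑v).ncard := by
    rw [← SimpleGraph.card_neighborSet_eq_degree, ← Nat.card_coe_set_eq,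
      Nat.card_eq_fintype_card]
  have hmin : G.minDegree ≤ 2 := le_trans (G.minDegree_le_degree ↑v) (hdegeq ▸ hcard)
  have hind : 1 ≤ _root_.indepNum G := by
    have hmem : 1 ∈ {n | ∃ A : Set V, IndepSet G A ∧ A.ncard = n} :=
      ⟨{(↑v : V)}, Set.pairwise_singleton _ _, Set.ncard_singleton _⟩
    have hbdd : BddAbove {n | ∃ A : Set V, IndepSet G A ∧ A.ncard = n} := by
      refine ⟨Fintype.card V, ?_⟩
      rintro n ⟨A, -, rfl⟩
      calc A.ncard ≤ (Set.univ : Set V).ncard :=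
            Set.ncard_le_ncard (Set.subset_univ A) Set.finite_univ
        _ = Fintype.card V := by rw [Set.ncard_univ, Nat.card_eq_fintype_card]
    exact le_csSup hbdd hmem
  have h1 : (G.minDegree : ℝ) ≤ 2 := by exact_mod_cast hmin
  have h2 : (1 : ℝ) ≤ (_root_.indepNum G : ℝ) := by exact_mod_cast hind
  linarith
end
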